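/- For every integer n ≥ 1: (1) for all integers 0 ≤ μ ≤ ⌊(n−1)/2⌋ one has C(n,0) = ∑_{k=0}^{2n} (−1)^{k+1}·[k choose n]·[k+1+2μ−n choose n]·∑_{j=k+1}^{2n} C(2n,j); and (2) for all integers 0 ≤ μ ≤ ⌊n/2⌋ one has (−1)^μ·C(n−μ,μ) − C(n,0) = ∑_{k=0}^{2n} (−1)^{k}·[k choose n]·[k+2μ−n choose n]·∑_{j=k+1}^{2n} C(2n,j). Here C(m,k) on the left-hand sides denotes the super Catalan number and C(2n,j) the ordinary binomial coefficient. -/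

import Mathlib

/-- The super Catalan number `C(m,k) = (2m)!·(2k)!/(2·m!·k!·(m+k)!)`. -/
def superCatalan (m k : ℕ) : ℚ :=
  (((2 * m).factorial : ℚ) * ((2 * k).factorial : ℚ)) /
    (2 * (m.factorial : ℚ) * (k.factorial : ℚ) * ((m + k).factorial : ℚ))

/-- The generalized binomial coefficient `[y choose n] = y(y−1)⋯(y−n+1)/n!` for rational `y`. -/
def genBinom (y : ℚ) (n : ℕ) : ℚ :=
  (∏ i ∈ Finset.range n, (y - (i : ℚ))) / (n.factorial : ℚ)

namespace Stmt16Aux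
open Finset

lemma gb_nat (k n : ℕ) : genBinom (k : ℚ) n = (k.choose n : ℚ) := by
  unfold genBinom
  rcases lt_or_ge k n with h | h
  · rw [Nat.choose_eq_zero_of_lt h, Finset.prod_eq_zero (Finset.mem_range.2 h) (by simp)]
    simp
  · have hp : ∏ i ∈ Finset.range n, ((k : ℚ) - i) = (k.descFactorial n : ℚ) := by
      rw [Nat.descFactorial_eq_prod_range, Nat.cast_prod]
      refine Finset.prod_congr rfl fun i hi => ?_
      have : i ≤ k := le_trans (Nat.le_of_lt_succ (Nat.lt_succ_of_lt (Finset.mem_range.1 hi))) h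
      rw [Nat.cast_sub this]
    rw [hp, Nat.descFactorial_eq_factorial_mul_choose]
    push_cast
    rw [mul_comm, mul_div_assoc, div_self (by exact_mod_cast Nat.factorial_ne_zero n), mul_one]

/-- partial binomial tail sum -/
def S (n k : ℕ) : ℚ := ∑ j ∈ Finset.Icc (k+1) (2*n), ((2*n).choose j : ℚ)

lemma S_succ (n k : ℕ) : S n k = S n (k+1) + ((2*n).choose (k+1) : ℚ) := by
  unfold S
  rcases le_or_gt (k+1) (2*n) with h | h
  · rw [Finset.Icc_eq_cons_Ioc h, Finset.sum_cons, ← Finset.Icc_add_one_left_eq_Ioc]; ring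
  · rw [Finset.Icc_eq_empty (by omega), Finset.Icc_eq_empty (by omega),
      Nat.choose_eq_zero_of_lt h]
    simp

lemma S_top (n : ℕ) : S n (2*n) = 0 := by
  unfold S; rw [Finset.Icc_eq_empty (by omega)]; simp

lemma S_top' (n : ℕ) : S n (2*n+1) = 0 := by
  unfold S; rw [Finset.Icc_eq_empty (by omega)]; simp



def U (n N : ℕ) : ℚ := ∑ k ∈ Finset.range (2*n+1), (-1:ℚ)^k * (k.choose N) * ((2*n).choose k)

lemma U_eq_zero (n N : ℕ) (h1 : 1 ≤ N) (h2 : N < 2*n) : U n N = 0 := by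
  unfold U
  have hsub : Finset.Icc N (2*n) ⊆ Finset.range (2*n+1) := by
    intro x hx; simp only [Finset.mem_Icc] at hx; simp only [Finset.mem_range]; omega
  rw [← Finset.sum_subset hsub (fun x hx hx' => by
    simp only [Finset.mem_range] at hx; simp only [Finset.mem_Icc] at hx'
    have : x < N := by omega
    rw [Nat.choose_eq_zero_of_lt this]; push_cast; ring)]
  have step : ∀ k ∈ Finset.Icc N (2*n),
      (-1:ℚ)^k * (k.choose N) * ((2*n).choose k)
        = ((2*n).choose N : ℚ) * ((-1)^k * ((2*n - N).choose (k - N))) := by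
    intro k hk
    simp only [Finset.mem_Icc] at hk
    have h := Nat.choose_mul (n := 2*n) (hk.1)
    have h' : ((2*n).choose k * k.choose N : ℚ) = ((2*n).choose N * ((2*n - N).choose (k - N)) : ℚ) := by
      exact_mod_cast congrArg (Nat.cast (R := ℚ)) h
    push_cast at h' ⊢
    linear_combination ((-1:ℚ)^k) * h'
  rw [Finset.sum_congr rfl step, ← Finset.mul_sum]
  rw [← Finset.Ico_add_one_right_eq_Icc, Finset.sum_Ico_eq_sum_range]
  have hrange : 2*n + 1 - N = (2*n - N) + 1 := by omega
  rw [hrange]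
  have : ∀ i, (N + i) - N = i := fun i => by omega
  have main : ∑ i ∈ Finset.range ((2*n - N) + 1), (-1:ℚ)^(N+i) * ((2*n - N).choose ((N+i) - N))
      = (-1:ℚ)^N * ∑ i ∈ Finset.range ((2*n - N) + 1), (-1:ℚ)^i * ((2*n - N).choose i) := by
    rw [Finset.mul_sum]
    refine Finset.sum_congr rfl fun i _ => ?_
    rw [this i, pow_add]; ring
  rw [main]
  have halt : (∑ i ∈ Finset.range ((2*n - N) + 1), (-1:ℚ)^i * ((2*n - N).choose i)) = 0 := by
    have := Int.alternating_sum_range_choose_of_ne (n := 2*n - N) (by omega)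
    exact_mod_cast congrArg (fun z : ℤ => (z : ℚ)) this
  rw [halt]; ring

lemma U_top (n : ℕ) : U n (2*n) = 1 := by
  unfold U
  rw [Finset.sum_range_succ]
  have h0 : ∑ k ∈ Finset.range (2*n), (-1:ℚ)^k * (k.choose (2*n)) * ((2*n).choose k) = 0 := by
    refine Finset.sum_eq_zero fun k hk => ?_
    rw [Nat.choose_eq_zero_of_lt (Finset.mem_range.1 hk)]; push_cast; ring
  rw [h0, Nat.choose_self]; simp



def V (n N : ℕ) : ℚ := ∑ k ∈ Finset.range (2*n+1), (-1:ℚ)^k * (k.choose N) * S n k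

lemma V_top (n : ℕ) : V n (2*n) = 0 := by
  unfold V
  refine Finset.sum_eq_zero fun k hk => ?_
  rcases lt_or_ge k (2*n) with h | h
  · rw [Nat.choose_eq_zero_of_lt h]; push_cast; ring
  · have : k = 2*n := by simp only [Finset.mem_range] at hk; omega
    rw [this, S_top]; ring

lemma V_rec (n N : ℕ) : V n N = -2 * V n (N+1) - U n (N+1) := by
  have pascal : ∀ k : ℕ, ((k.choose N : ℚ))
      = ((k+1).choose (N+1) : ℚ) - (k.choose (N+1) : ℚ) := by
    intro k
    have := Nat.choose_succ_succ' k N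
    have h' : (((k+1).choose (N+1) : ℕ) : ℚ) = (k.choose N : ℚ) + (k.choose (N+1) : ℚ) := by
      exact_mod_cast congrArg (fun z : ℕ => (z : ℚ)) this
    linarith
  have split : V n N
      = (∑ k ∈ Finset.range (2*n+1), (-1:ℚ)^k * ((k+1).choose (N+1)) * S n k) - V n (N+1) := by
    unfold V
    rw [← Finset.sum_sub_distrib]
    refine Finset.sum_congr rfl fun k _ => ?_
    rw [pascal k]; ring
  -- T = T1 + T2
  have hT : (∑ k ∈ Finset.range (2*n+1), (-1:ℚ)^k * ((k+1).choose (N+1)) * S n k)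
      = (∑ k ∈ Finset.range (2*n+1), (-1:ℚ)^k * ((k+1).choose (N+1)) * S n (k+1))
        + (∑ k ∈ Finset.range (2*n+1), (-1:ℚ)^k * ((k+1).choose (N+1)) * ((2*n).choose (k+1))) := by
    rw [← Finset.sum_add_distrib]
    refine Finset.sum_congr rfl fun k _ => ?_
    rw [S_succ n k]; ring
  have hT1 : (∑ k ∈ Finset.range (2*n+1), (-1:ℚ)^k * ((k+1).choose (N+1)) * S n (k+1))
      = - V n (N+1) := by
    rw [Finset.sum_range_succ]
    have hVs : V n (N+1)
        = ∑ k ∈ Finset.range (2*n), (-1:ℚ)^(k+1) * ((k+1).choose (N+1)) * S n (k+1) := by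
      unfold V
      rw [Finset.sum_range_succ']
      simp [Nat.choose_zero_succ]
    rw [S_top', hVs, ← Finset.sum_neg_distrib]
    rw [mul_zero, add_zero]
    refine Finset.sum_congr rfl fun k _ => ?_
    rw [pow_succ]; ring
  have hT2 : (∑ k ∈ Finset.range (2*n+1), (-1:ℚ)^k * ((k+1).choose (N+1)) * ((2*n).choose (k+1)))
      = - U n (N+1) := by
    rw [Finset.sum_range_succ]
    have hUs : U n (N+1)
        = ∑ k ∈ Finset.range (2*n), (-1:ℚ)^(k+1) * ((k+1).choose (N+1)) * ((2*n).choose (k+1)) := by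
      unfold U
      rw [Finset.sum_range_succ']
      simp [Nat.choose_zero_succ]
    rw [Nat.choose_succ_self, hUs, ← Finset.sum_neg_distrib]
    push_cast
    rw [mul_zero, add_zero]
    refine Finset.sum_congr rfl fun k _ => ?_
    rw [pow_succ]; ring
  rw [split, hT, hT1, hT2]; ring

lemma V_eval (n r : ℕ) (hn : 1 ≤ n) (hr : r ≤ n) :
    V n (2*n - r) = ((-2:ℚ)^r - if r = 0 then 1 else 0)/2 := by
  induction r with
  | zero => simpa using V_top n
  | succ r ih =>
    have hr' : r ≤ n := by omega
    have h2 : 2*n - r = (2*n - (r+1)) + 1 := by omega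
    have hrec := V_rec n (2*n - (r+1))
    rw [← h2] at hrec
    rw [hrec, ih hr']
    rcases Nat.eq_zero_or_pos r with h0 | h0
    · subst h0
      simp only [Nat.sub_zero] at *
      rw [U_top n]
      norm_num
    · rw [U_eq_zero n (2*n - r) (by omega) (by omega)]
      rw [if_neg (by omega), if_neg (by omega)]
      rw [pow_succ]; ring



lemma choose_mul_choose (n r k : ℕ) (hr : r ≤ n) (hk : n ≤ k) :
    k.choose n * (k - n).choose (n - r) = k.choose (2*n - r) * ((2*n - r).choose n) := by
  rcases le_or_gt (2*n - r) k with h | h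
  · have := Nat.choose_mul (n := k) (k := 2*n - r) (s := n) (by omega)
    rw [this]
    congr 2
    omega
  · rw [Nat.choose_eq_zero_of_lt h, Nat.choose_eq_zero_of_lt (show k - n < n - r by omega)]
    simp

lemma vanderNat (n c k : ℕ) (hc : c ≤ n) :
    k.choose n * ((k + c - n).choose n)
      = ∑ r ∈ Finset.range (n+1), c.choose r * ((2*n - r).choose n) * (k.choose (2*n - r)) := by
  rcases lt_or_ge k n with h | h
  · rw [Nat.choose_eq_zero_of_lt h, Nat.zero_mul]
    symm
    refine Finset.sum_eq_zero fun r hr => ?_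
    have hrn : r ≤ n := by simp only [Finset.mem_range] at hr; omega
    rw [Nat.choose_eq_zero_of_lt (show k < 2*n - r by omega), Nat.mul_zero]
  · have key : k + c - n = (k - n) + c := by omega
    rw [key, Nat.add_choose_eq (k - n) c n, Finset.Nat.sum_antidiagonal_eq_sum_range_succ_mk]
    rw [Finset.mul_sum]
    -- LHS = ∑_{i∈range(n+1)} k.choose n * ((k-n).choose i * c.choose (n-i))
    -- reflect: i ↦ n - i
    rw [show (n+1) = (n+1) - 1 + 1 by omega] at *
    rw [← Finset.sum_range_reflect]
    refine Finset.sum_congr rfl fun i hi => ?_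
    have hin : i ≤ n := by simp only [Finset.mem_range] at hi; omega
    have h1 : n + 1 - 1 - i = n - i := by omega
    have h2 : n - (n - i) = i := by omega
    rw [h1, h2]
    rw [← Nat.mul_assoc]
    rw [show k.choose n * (k - n).choose (n - i) = k.choose (2*n - i) * ((2*n - i).choose n) from
      choose_mul_choose n i k hin h]
    ring



def Q (n c : ℕ) : ℚ := ∑ r ∈ Finset.range (n+1), (-2:ℚ)^r * (c.choose r) * ((2*n - r).choose n)

lemma G_eval (n c : ℕ) (hn : 1 ≤ n) (hc : c ≤ n) :
    ∑ k ∈ Finset.range (2*n+1), (-1:ℚ)^k * (k.choose n) * ((k + c - n).choose n) * S n k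
      = (Q n c - ((2*n).choose n : ℚ)) / 2 := by
  have step1 : ∀ k, ((k.choose n : ℚ)) * (((k + c - n).choose n : ℚ))
      = ∑ r ∈ Finset.range (n+1),
          (c.choose r : ℚ) * (((2*n - r).choose n : ℚ)) * ((k.choose (2*n - r) : ℚ)) := by
    intro k
    have := vanderNat n c k hc
    exact_mod_cast congrArg (fun z : ℕ => (z : ℚ)) this
  calc ∑ k ∈ Finset.range (2*n+1), (-1:ℚ)^k * (k.choose n) * ((k + c - n).choose n) * S n k
      = ∑ k ∈ Finset.range (2*n+1), ∑ r ∈ Finset.range (n+1),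
          (c.choose r : ℚ) * (((2*n - r).choose n : ℚ))
            * ((-1:ℚ)^k * ((k.choose (2*n - r) : ℚ)) * S n k) := by
        refine Finset.sum_congr rfl fun k _ => ?_
        rw [show (-1:ℚ)^k * (k.choose n) * ((k + c - n).choose n) * S n k
            = ((k.choose n : ℚ) * ((k + c - n).choose n)) * ((-1:ℚ)^k * S n k) by ring]
        rw [step1 k, Finset.sum_mul]
        refine Finset.sum_congr rfl fun r _ => ?_
        ring
    _ = ∑ r ∈ Finset.range (n+1),
          (c.choose r : ℚ) * (((2*n - r).choose n : ℚ)) * V n (2*n - r) := by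
        rw [Finset.sum_comm]
        refine Finset.sum_congr rfl fun r _ => ?_
        unfold V
        rw [Finset.mul_sum]
    _ = ∑ r ∈ Finset.range (n+1),
          ((-2:ℚ)^r * (c.choose r) * ((2*n - r).choose n) / 2
            - (if r = 0 then 1 else 0) * (c.choose r) * ((2*n - r).choose n) / 2) := by
        refine Finset.sum_congr rfl fun r hr => ?_
        rw [V_eval n r hn (by simp only [Finset.mem_range] at hr; omega)]
        ring
    _ = (Q n c - ((2*n).choose n : ℚ)) / 2 := by
        rw [Finset.sum_sub_distrib]
        unfold Q
        have h2 : ∑ r ∈ Finset.range (n+1),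
            (if r = 0 then (1:ℚ) else 0) * (c.choose r) * ((2*n - r).choose n) / 2
            = ((2*n).choose n : ℚ) / 2 := by
          rw [Finset.sum_eq_single 0]
          · simp
          · intro r _ hr0; rw [if_neg hr0]; ring
          · intro h; exact absurd (Finset.mem_range.2 (by omega)) h
        rw [h2]
        rw [← Finset.sum_div]
        ring



lemma abs1 (c s : ℕ) : ((c:ℚ)+1) * (c.choose (s+1)) = ((c:ℚ) - s) * ((c+1).choose (s+1)) := by
  rcases le_or_gt (s+1) c with h | h
  · have hN := Nat.choose_mul_succ_eq c (s+1)
    have h' : ((c.choose (s+1) * (c+1) : ℕ) : ℚ)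
        = (((c+1).choose (s+1) : ℕ) : ℚ) * ((c+1-(s+1) : ℕ) : ℚ) := by
      exact_mod_cast congrArg (fun z : ℕ => (z : ℚ)) hN
    rw [Nat.cast_sub (by omega)] at h'
    push_cast at h' ⊢
    linarith
  · rcases Nat.lt_or_ge c s with h2 | h2
    · rw [Nat.choose_eq_zero_of_lt (by omega), Nat.choose_eq_zero_of_lt (by omega)]
      push_cast; ring
    · have : s = c := by omega
      subst this
      rw [Nat.choose_eq_zero_of_lt (by omega)]
      push_cast; ring

lemma abs2 (c s : ℕ) : ((s:ℚ)+1) * ((c+1).choose (s+1)) = ((c:ℚ) + 1 - s) * ((c+1).choose s) := by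
  rcases le_or_gt s (c+1) with h | h
  · have hN := Nat.choose_succ_right_eq (c+1) s
    have h' : (((c+1).choose (s+1) : ℕ) : ℚ) * ((s+1 : ℕ) : ℚ)
        = (((c+1).choose s : ℕ) : ℚ) * ((c+1-s : ℕ) : ℚ) := by
      exact_mod_cast congrArg (fun z : ℕ => (z : ℚ)) hN
    rw [Nat.cast_sub (by omega)] at h'
    push_cast at h' ⊢
    linarith
  · rw [Nat.choose_eq_zero_of_lt (by omega), Nat.choose_eq_zero_of_lt (by omega)]
    push_cast; ring

lemma A0 (n : ℕ) : ((n:ℚ)+1) * ((2*n).choose (n+1)) = (n:ℚ) * ((2*n).choose n) := by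
  have hN := Nat.choose_succ_right_eq (2*n) n
  have h' : (((2*n).choose (n+1) : ℕ) : ℚ) * ((n+1 : ℕ) : ℚ)
      = (((2*n).choose n : ℕ) : ℚ) * ((2*n-n : ℕ) : ℚ) := by
    exact_mod_cast congrArg (fun z : ℕ => (z : ℚ)) hN
  rw [show 2*n-n = n by omega] at h'
  push_cast at h' ⊢
  linarith

lemma A1 (n s : ℕ) (h : s + 1 ≤ n) :
    ((n:ℚ)+1) * ((2*n - (s+1)).choose (n+1)) = ((n:ℚ) - s - 1) * ((2*n - (s+1)).choose n) := by
  have hN := Nat.choose_succ_right_eq (2*n - (s+1)) n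
  have h' : (((2*n - (s+1)).choose (n+1) : ℕ) : ℚ) * ((n+1 : ℕ) : ℚ)
      = (((2*n - (s+1)).choose n : ℕ) : ℚ) * ((2*n - (s+1) - n : ℕ) : ℚ) := by
    exact_mod_cast congrArg (fun z : ℕ => (z : ℚ)) hN
  rw [show 2*n - (s+1) - n = n - (s+1) by omega, Nat.cast_sub (by omega)] at h'
  push_cast at h' ⊢
  linarith

lemma A2 (n s : ℕ) (h : s + 1 ≤ n) :
    ((n:ℚ)+1) * ((2*n - s).choose (n+1)) = (2*(n:ℚ) - s) * ((2*n - (s+1)).choose n) := by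
  have hN := Nat.add_one_mul_choose_eq (2*n - (s+1)) n
  -- (2n-s-1+1) * C(2n-s-1, n) = C(2n-s, n+1) * (n+1)
  have h' : ((Nat.succ (2*n - (s+1)) * (2*n - (s+1)).choose n : ℕ) : ℚ)
      = (((2*n - (s+1) + 1).choose (n+1) : ℕ) : ℚ) * ((n+1 : ℕ) : ℚ) := by
    exact_mod_cast congrArg (fun z : ℕ => (z : ℚ)) hN
  rw [show 2*n - (s+1) + 1 = 2*n - s by omega] at h'
  rw [show Nat.succ (2*n - (s+1)) = 2*n - s by omega] at h'
  rw [Nat.cast_mul, Nat.cast_sub (show s ≤ 2*n by omega)] at h'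
  push_cast at h' ⊢
  linarith

def Gc (n c : ℕ) : ℕ → ℚ
  | 0 => 0
  | (r+1) => 2*((n:ℚ)+1) * (-2:ℚ)^r * ((c+1).choose r) * ((2*n - r).choose (n+1))

lemma cert (n c r : ℕ) (hr : r ≤ n) (hc : c + 2 ≤ n) :
    ((n:ℚ)+1) * ((2*(n:ℚ) - c - 1) * ((-2:ℚ)^r * ((c+2).choose r) * ((2*n - r).choose n))
      + ((c:ℚ)+1) * ((-2:ℚ)^r * (c.choose r) * ((2*n - r).choose n)))
      = ((n:ℚ)+1) * (Gc n c (r+1) - Gc n c r) := by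
  cases r with
  | zero =>
    simp only [Gc, pow_zero, Nat.choose_zero_right, Nat.cast_one, Nat.sub_zero]
    have := A0 n
    push_cast
    linear_combination (-2)*((n:ℚ)+1) * this
  | succ s =>
    have hs : s + 1 ≤ n := hr
    simp only [Gc]
    have e1N : (c+2).choose (s+1) = (c+1).choose s + (c+1).choose (s+1) :=
      Nat.choose_succ_succ' (c+1) s
    have e1 : (((c+2).choose (s+1) : ℕ) : ℚ)
        = ((c+1).choose s : ℚ) + ((c+1).choose (s+1) : ℚ) := by exact_mod_cast e1N
    have e2 := abs1 c s
    have e3 := abs2 c s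
    have e4 := A1 n s hs
    have e5 := A2 n s hs
    set u : ℚ := ((c+1).choose (s+1) : ℚ)
    set v : ℚ := ((c+1).choose s : ℚ)
    set Y : ℚ := (((2*n - (s+1)).choose n : ℕ) : ℚ)
    set Y1 : ℚ := (((2*n - (s+1)).choose (n+1) : ℕ) : ℚ)
    set Y2 : ℚ := (((2*n - s).choose (n+1) : ℕ) : ℚ)
    push_cast
    linear_combination ((n:ℚ)+1) * (2*(n:ℚ)-c-1) * (-2:ℚ)^(s+1) * Y * e1
      + ((n:ℚ)+1) * (-2:ℚ)^(s+1) * Y * e2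
      + ((n:ℚ)+1) * (-2:ℚ)^(s+1) * Y * e3
      - 2 * ((n:ℚ)+1) * (-2:ℚ)^(s+1) * u * e4
      + 2 * ((n:ℚ)+1) * (-2:ℚ)^s * v * e5


lemma Qrec (n c : ℕ) (hc : c + 2 ≤ n) :
    (2*(n:ℚ) - c - 1) * Q n (c+2) + ((c:ℚ)+1) * Q n c = 0 := by
  have hn1 : ((n:ℚ)+1) ≠ 0 := by positivity
  apply mul_left_cancel₀ hn1
  rw [mul_zero]
  have tele := Finset.sum_range_sub (f := Gc n c) (n+1)
  have top : Gc n c (n+1) = 0 := by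
    show 2*((n:ℚ)+1) * (-2:ℚ)^n * ((c+1).choose n) * ((2*n - n).choose (n+1)) = 0
    rw [show 2*n - n = n by omega, Nat.choose_succ_self]
    push_cast; ring
  have zero : Gc n c 0 = 0 := rfl
  calc ((n:ℚ)+1) * ((2*(n:ℚ) - c - 1) * Q n (c+2) + ((c:ℚ)+1) * Q n c)
      = ∑ r ∈ Finset.range (n+1),
          ((n:ℚ)+1) * ((2*(n:ℚ) - c - 1) * ((-2:ℚ)^r * ((c+2).choose r) * ((2*n - r).choose n))
            + ((c:ℚ)+1) * ((-2:ℚ)^r * (c.choose r) * ((2*n - r).choose n))) := by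
        unfold Q
        simp only [Finset.mul_sum, ← Finset.sum_add_distrib]
    _ = ∑ r ∈ Finset.range (n+1), ((n:ℚ)+1) * (Gc n c (r+1) - Gc n c r) := by
        refine Finset.sum_congr rfl fun r hr => ?_
        exact cert n c r (by simp only [Finset.mem_range] at hr; omega) hc
    _ = ((n:ℚ)+1) * (Gc n c (n+1) - Gc n c 0) := by
        rw [← Finset.mul_sum, tele]
    _ = 0 := by rw [top, zero]; ring

lemma Q_zero (n : ℕ) : Q n 0 = ((2*n).choose n : ℚ) := by
  unfold Q
  rw [Finset.sum_eq_single 0]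
  · simp
  · intro r _ hr0
    rw [Nat.choose_eq_zero_of_lt (by omega)]; push_cast; ring
  · intro h; exact absurd (Finset.mem_range.2 (by omega)) h

lemma Q_one (n : ℕ) (hn : 1 ≤ n) : Q n 1 = 0 := by
  unfold Q
  have hsub : Finset.range 2 ⊆ Finset.range (n+1) := by
    intro x hx; simp only [Finset.mem_range] at *; omega
  rw [← Finset.sum_subset hsub (fun x hx hx' => by
    simp only [Finset.mem_range] at hx hx'
    rw [Nat.choose_eq_zero_of_lt (show 1 < x by omega)]
    push_cast; ring)]
  rw [Finset.sum_range_succ, Finset.sum_range_succ, Finset.range_zero, Finset.sum_empty]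
  simp only [pow_zero, pow_one, Nat.choose_zero_right, Nat.choose_self, Nat.cast_one,
    Nat.sub_zero, one_mul, mul_one, zero_add]
  obtain ⟨m, rfl⟩ : ∃ m, n = m + 1 := ⟨n - 1, by omega⟩
  have h3 : (2*m+1+1).choose (m+1) = (2*m+1).choose m + (2*m+1).choose (m+1) :=
    Nat.choose_succ_succ' (2*m+1) m
  have h4 : (2*m+1).choose (m+1) = (2*m+1).choose m := Nat.choose_symm_half m
  rw [show 2*(m+1) - 1 = 2*m+1 by omega, show 2*(m+1) = 2*m+1+1 by ring, h3, h4]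
  push_cast; ring

lemma scStep (a μ : ℕ) :
    (2*(a:ℚ)+1) * superCatalan a (μ+1) = (2*(μ:ℚ)+1) * superCatalan (a+1) μ := by
  unfold superCatalan
  rw [show 2*(μ+1) = 2*μ+1+1 by ring, show 2*(a+1) = 2*a+1+1 by ring]
  rw [Nat.factorial_succ (2*μ+1), Nat.factorial_succ (2*μ), Nat.factorial_succ (2*a+1),
    Nat.factorial_succ (2*a), Nat.factorial_succ μ, Nat.factorial_succ a,
    show a + (μ+1) = (a+1) + μ by omega]
  have f1 : ((2*a).factorial : ℚ) ≠ 0 := Nat.cast_ne_zero.2 (Nat.factorial_ne_zero _)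
  have f2 : ((2*μ).factorial : ℚ) ≠ 0 := Nat.cast_ne_zero.2 (Nat.factorial_ne_zero _)
  have f3 : ((a).factorial : ℚ) ≠ 0 := Nat.cast_ne_zero.2 (Nat.factorial_ne_zero _)
  have f4 : ((μ).factorial : ℚ) ≠ 0 := Nat.cast_ne_zero.2 (Nat.factorial_ne_zero _)
  have f5 : (((a+1)+μ).factorial : ℚ) ≠ 0 := Nat.cast_ne_zero.2 (Nat.factorial_ne_zero _)
  push_cast
  field_simp
  ring

lemma sc_zero (n : ℕ) : superCatalan n 0 = ((2*n).choose n : ℚ) / 2 := by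
  unfold superCatalan
  rw [Nat.cast_choose ℚ (show n ≤ 2*n by omega), show 2*n - n = n by omega]
  have f3 : ((n).factorial : ℚ) ≠ 0 := Nat.cast_ne_zero.2 (Nat.factorial_ne_zero _)
  have f1 : (((2*n)).factorial : ℚ) ≠ 0 := Nat.cast_ne_zero.2 (Nat.factorial_ne_zero _)
  simp only [Nat.mul_zero, Nat.factorial_zero, Nat.add_zero, Nat.cast_one]
  rw [mul_one]
  rw [div_div]
  congr 1
  ring

lemma Q_odd (n μ : ℕ) (h : 2*μ+1 ≤ n) : Q n (2*μ+1) = 0 := by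
  induction μ with
  | zero => exact Q_one n (by omega)
  | succ μ ih =>
    have hrec := Qrec n (2*μ+1) (by omega)
    rw [ih (by omega)] at hrec
    push_cast at hrec
    have hne : (2*(n:ℚ) - (2*(μ:ℚ)+1) - 1) ≠ 0 := by
      have h3 : ((2*μ+2 : ℕ) : ℚ) < ((2*n : ℕ) : ℚ) := by exact_mod_cast (by omega : 2*μ+2 < 2*n)
      push_cast at h3
      intro hx; linarith
    rw [show 2*(μ+1)+1 = 2*μ+1+2 by ring]
    rcases mul_eq_zero.1 (show (2*(n:ℚ) - (2*(μ:ℚ)+1) - 1) * Q n (2*μ+1+2) = 0 by linarith)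
      with hz | hz
    · exact absurd hz hne
    · exact hz

lemma Q_even (n μ : ℕ) (h : 2*μ ≤ n) :
    Q n (2*μ) = (-1:ℚ)^μ * 2 * superCatalan (n-μ) μ := by
  induction μ with
  | zero =>
    simp only [Nat.mul_zero, pow_zero, one_mul, Nat.sub_zero]
    rw [Q_zero, sc_zero]; ring
  | succ μ ih =>
    have hrec := Qrec n (2*μ) (by omega)
    rw [ih (by omega)] at hrec
    push_cast at hrec
    have hsc := scStep (n - (μ+1)) μ
    rw [show n - (μ+1) + 1 = n - μ by omega] at hsc
    rw [show ((n - (μ+1) : ℕ) : ℚ) = (n:ℚ) - μ - 1 by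
      rw [Nat.cast_sub (by omega : μ+1 ≤ n)]; push_cast; ring] at hsc
    have hne : (2*(n:ℚ) - 2*(μ:ℚ) - 1) ≠ 0 := by
      have h3 : ((2*μ+1 : ℕ) : ℚ) < ((2*n : ℕ) : ℚ) := by exact_mod_cast (by omega : 2*μ+1 < 2*n)
      push_cast at h3
      intro hx; linarith
    rw [show 2*(μ+1) = 2*μ+2 by ring]
    have hgoal : (2*(n:ℚ) - 2*(μ:ℚ) - 1) * Q n (2*μ+2)
        = (2*(n:ℚ) - 2*(μ:ℚ) - 1) * ((-1:ℚ)^(μ+1) * 2 * superCatalan (n-(μ+1)) (μ+1)) := by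
      rw [pow_succ]
      linear_combination hrec + 2*(-1:ℚ)^μ * hsc
    exact mul_left_cancel₀ hne hgoal


end Stmt16Aux

open Stmt16Aux in
/-- For every `n ≥ 1`:
(1) for `0 ≤ μ ≤ ⌊(n−1)/2⌋`:
`C(n,0) = ∑_{k=0}^{2n} (−1)^{k+1}·[k choose n]·[k+1+2μ−n choose n]·∑_{j=k+1}^{2n} C(2n,j)`;
(2) for `0 ≤ μ ≤ ⌊n/2⌋`:
`(−1)^μ·C(n−μ,μ) − C(n,0) = ∑_{k=0}^{2n} (−1)^k·[k choose n]·[k+2μ−n choose n]·∑_{j=k+1}^{2n} C(2n,j)`. -/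
theorem stmt16 : ∀ n : ℕ, 1 ≤ n →
    (∀ μ : ℕ, μ ≤ (n - 1) / 2 →
      superCatalan n 0 =
        ∑ k ∈ Finset.range (2 * n + 1),
          (-1 : ℚ) ^ (k + 1) * genBinom (k : ℚ) n *
            genBinom ((k : ℚ) + 1 + 2 * (μ : ℚ) - (n : ℚ)) n *
            ∑ j ∈ Finset.Icc (k + 1) (2 * n), ((2 * n).choose j : ℚ)) ∧
    (∀ μ : ℕ, μ ≤ n / 2 →
      (-1 : ℚ) ^ μ * superCatalan (n - μ) μ - superCatalan n 0 =
        ∑ k ∈ Finset.range (2 * n + 1),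
          (-1 : ℚ) ^ k * genBinom (k : ℚ) n *
            genBinom ((k : ℚ) + 2 * (μ : ℚ) - (n : ℚ)) n *
            ∑ j ∈ Finset.Icc (k + 1) (2 * n), ((2 * n).choose j : ℚ)) := by
  intro n hn
  constructor
  · intro μ hμ
    have hc : 2*μ+1 ≤ n := by omega
    have key : ∑ k ∈ Finset.range (2 * n + 1),
        (-1 : ℚ) ^ (k + 1) * genBinom (k : ℚ) n *
          genBinom ((k : ℚ) + 1 + 2 * (μ : ℚ) - (n : ℚ)) n *
          ∑ j ∈ Finset.Icc (k + 1) (2 * n), ((2 * n).choose j : ℚ)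
        = - ∑ k ∈ Finset.range (2*n+1),
            (-1:ℚ)^k * (k.choose n) * ((k + (2*μ+1) - n).choose n) * S n k := by
      rw [← Finset.sum_neg_distrib]
      refine Finset.sum_congr rfl fun k _ => ?_
      rcases lt_or_ge k n with h | h
      · rw [gb_nat, Nat.choose_eq_zero_of_lt h]
        push_cast
        ring
      · have harg : (k : ℚ) + 1 + 2 * (μ : ℚ) - (n : ℚ) = ((k + (2*μ+1) - n : ℕ) : ℚ) := by
          rw [Nat.cast_sub (by omega : n ≤ k + (2*μ+1))]
          push_cast; ring
        rw [gb_nat, harg, gb_nat]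
        show _ = -((-1:ℚ)^k * (k.choose n) * ((k + (2*μ+1) - n).choose n)
          * ∑ j ∈ Finset.Icc (k + 1) (2 * n), ((2 * n).choose j : ℚ))
        rw [pow_succ]
        ring
    rw [key, G_eval n (2*μ+1) hn hc, Q_odd n μ hc, sc_zero]
    ring
  · intro μ hμ
    have hc : 2*μ ≤ n := by omega
    have key : ∑ k ∈ Finset.range (2 * n + 1),
        (-1 : ℚ) ^ k * genBinom (k : ℚ) n *
          genBinom ((k : ℚ) + 2 * (μ : ℚ) - (n : ℚ)) n *
          ∑ j ∈ Finset.Icc (k + 1) (2 * n), ((2 * n).choose j : ℚ)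
        = ∑ k ∈ Finset.range (2*n+1),
            (-1:ℚ)^k * (k.choose n) * ((k + 2*μ - n).choose n) * S n k := by
      refine Finset.sum_congr rfl fun k _ => ?_
      rcases lt_or_ge k n with h | h
      · rw [gb_nat, Nat.choose_eq_zero_of_lt h]
        push_cast; ring
      · have harg : (k : ℚ) + 2 * (μ : ℚ) - (n : ℚ) = ((k + 2*μ - n : ℕ) : ℚ) := by
          rw [Nat.cast_sub (by omega : n ≤ k + 2*μ)]
          push_cast; ring
        rw [gb_nat, harg, gb_nat]
        rfl
    rw [key, G_eval n (2*μ) hn hc, Q_even n μ hc, sc_zero]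
    ring
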